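/- arXiv:1804.00101 — 2 statements merged into one kernel-verified Lean document; each statement's English description precedes it below -/
import Mathlib

section
/- Let A be a finite nonempty set of points in ℝ² and let η > 0. Then (A, η) has exactly one maximal optimal partition: a maximal optimal partition of (A, η) exists, and any two maximal optimal partitions of (A, η) are equal. -/
noncomputable section

/-- The Euclidean plane. -/
abbrev Plane := EuclideanSpace ℝ (Fin 2)

/-- Perimeter of a bounded set via Cauchy's formula. -/
noncomputable def perim (C : Set Plane) : ℝ :=
  ∫ θ in (0:ℝ)..(2 * Real.pi),
    sSup ((fun p : Plane => p 0 * Real.cos θ + p 1 * Real.sin θ) '' C)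

/-- the support-type function appearing in `perim`. -/
noncomputable def suppTh (θ : ℝ) (C : Set Plane) : ℝ :=
  sSup ((fun p : Plane => p 0 * Real.cos θ + p 1 * Real.sin θ) '' C)

lemma perim_eq (C : Set Plane) :
    perim C = ∫ θ in (0:ℝ)..(2 * Real.pi), suppTh θ C := rfl

lemma continuous_sup' (t : Finset Plane) (htne : t.Nonempty) :
    Continuous (fun θ : ℝ => t.sup' htne (fun p : Plane => p 0 * Real.cos θ + p 1 * Real.sin θ)) := by
  exact Continuous.finset_sup'_apply htne (fun p _ => by fun_prop)

lemma continuous_suppTh {C : Set Plane} (hfin : C.Finite) (hne : C.Nonempty) :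
    Continuous (fun θ : ℝ => suppTh θ C) := by
  classical
  set t : Finset Plane := hfin.toFinset with ht
  have htne : t.Nonempty := by
    simpa [ht, Set.Finite.toFinset] using hne
  have hco : (t : Set Plane) = C := hfin.coe_toFinset
  have key : ∀ θ : ℝ, suppTh θ C
      = t.sup' htne (fun p : Plane => p 0 * Real.cos θ + p 1 * Real.sin θ) := by
    intro θ
    rw [Finset.sup'_eq_csSup_image, hco, suppTh]
  simp only [key]
  exact continuous_sup' t htne

lemma suppTh_le_of_mem {C : Set Plane} (hfin : C.Finite) {p : Plane} (hp : p ∈ C) (θ : ℝ) :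
    p 0 * Real.cos θ + p 1 * Real.sin θ ≤ suppTh θ C :=
  le_csSup (hfin.image _).bddAbove ⟨p, hp, rfl⟩

lemma suppTh_mono {C C' : Set Plane} (h : C ⊆ C') (hC : C.Nonempty) (hfin : C'.Finite) (θ : ℝ) :
    suppTh θ C ≤ suppTh θ C' :=
  csSup_le_csSup (hfin.image _).bddAbove (hC.image _) (Set.image_mono h)


lemma key_pointwise (θ : ℝ) (I : Finset (Set Plane)) (hIne : I.Nonempty)
    (D : Set Plane) (hDfin : D.Finite)
    (hCfin : ∀ C ∈ I, (C : Set Plane).Finite)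
    (hmeet : ∀ C ∈ I, (D ∩ C).Nonempty) :
    suppTh θ (⋃₀ (I : Set (Set Plane))) + ∑ C ∈ I, suppTh θ (D ∩ C)
      ≤ (∑ C ∈ I, suppTh θ C) + suppTh θ D := by
  classical
  set f : Plane → ℝ := fun p => p 0 * Real.cos θ + p 1 * Real.sin θ with hf
  set W : Set Plane := ⋃₀ (I : Set (Set Plane)) with hW
  have hWfin : W.Finite := Set.Finite.sUnion I.finite_toSet (fun C hC => hCfin C hC)
  have hWne : W.Nonempty := by
    obtain ⟨C, hC⟩ := hIne
    obtain ⟨x, hx⟩ := hmeet C hC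
    exact ⟨x, Set.mem_sUnion.2 ⟨C, by exact_mod_cast hC, hx.2⟩⟩
  -- the sup over W is attained at a point of some C₀ ∈ I
  have hmem : sSup (f '' W) ∈ f '' W :=
    Set.Nonempty.csSup_mem (hWne.image f) (hWfin.image f)
  obtain ⟨p, hpW, hps⟩ := hmem
  obtain ⟨C₀, hC₀I, hpC₀⟩ := Set.mem_sUnion.1 hpW
  have hC₀I' : C₀ ∈ I := by exact_mod_cast hC₀I
  have h1 : suppTh θ W ≤ suppTh θ C₀ := by
    rw [show suppTh θ W = f p from hps.symm]
    exact suppTh_le_of_mem (hCfin C₀ hC₀I') hpC₀ θ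
  have h2 : suppTh θ (D ∩ C₀) ≤ suppTh θ D :=
    suppTh_mono Set.inter_subset_left (hmeet C₀ hC₀I') hDfin θ
  have h3 : ∀ C ∈ I.erase C₀, suppTh θ (D ∩ C) ≤ suppTh θ C := fun C hC =>
    suppTh_mono Set.inter_subset_right (hmeet C (Finset.mem_of_mem_erase hC))
      (hCfin C (Finset.mem_of_mem_erase hC)) θ
  have e1 : ∑ C ∈ I, suppTh θ (D ∩ C)
      = ∑ C ∈ I.erase C₀, suppTh θ (D ∩ C) + suppTh θ (D ∩ C₀) :=
    (Finset.sum_erase_add I _ hC₀I').symm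
  have e2 : ∑ C ∈ I, suppTh θ C
      = ∑ C ∈ I.erase C₀, suppTh θ C + suppTh θ C₀ :=
    (Finset.sum_erase_add I _ hC₀I').symm
  have h4 : ∑ C ∈ I.erase C₀, suppTh θ (D ∩ C) ≤ ∑ C ∈ I.erase C₀, suppTh θ C :=
    Finset.sum_le_sum h3
  rw [e1, e2]
  linarith

lemma key_perim (I : Finset (Set Plane)) (hIne : I.Nonempty)
    (D : Set Plane) (hDfin : D.Finite) (hDne : D.Nonempty)
    (hCfin : ∀ C ∈ I, (C : Set Plane).Finite)
    (hmeet : ∀ C ∈ I, (D ∩ C).Nonempty) :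
    perim (⋃₀ (I : Set (Set Plane))) + ∑ C ∈ I, perim (D ∩ C)
      ≤ (∑ C ∈ I, perim C) + perim D := by
  classical
  have hWfin : (⋃₀ (I : Set (Set Plane))).Finite :=
    Set.Finite.sUnion I.finite_toSet (fun C hC => hCfin C hC)
  have hWne : (⋃₀ (I : Set (Set Plane))).Nonempty := by
    obtain ⟨C, hC⟩ := hIne
    obtain ⟨x, hx⟩ := hmeet C hC
    exact ⟨x, Set.mem_sUnion.2 ⟨C, by exact_mod_cast hC, hx.2⟩⟩
  have hCne : ∀ C ∈ I, (C : Set Plane).Nonempty := fun C hC =>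
    ((hmeet C hC).mono Set.inter_subset_right)
  -- continuity of all integrands
  have cW := continuous_suppTh hWfin hWne
  have cD := continuous_suppTh hDfin hDne
  have cC : ∀ C ∈ I, Continuous (fun θ : ℝ => suppTh θ C) :=
    fun C hC => continuous_suppTh (hCfin C hC) (hCne C hC)
  have cDC : ∀ C ∈ I, Continuous (fun θ : ℝ => suppTh θ (D ∩ C)) :=
    fun C hC => continuous_suppTh (hDfin.inter_of_left C) (hmeet C hC)
  have cL : Continuous (fun θ : ℝ =>
      suppTh θ (⋃₀ (I : Set (Set Plane))) + ∑ C ∈ I, suppTh θ (D ∩ C)) :=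
    cW.add (continuous_finset_sum I cDC)
  have cR : Continuous (fun θ : ℝ => (∑ C ∈ I, suppTh θ C) + suppTh θ D) :=
    (continuous_finset_sum I cC).add cD
  have h2pi : (0:ℝ) ≤ 2 * Real.pi := by positivity
  have hmono : (∫ θ in (0:ℝ)..(2*Real.pi),
        (suppTh θ (⋃₀ (I : Set (Set Plane))) + ∑ C ∈ I, suppTh θ (D ∩ C)))
      ≤ ∫ θ in (0:ℝ)..(2*Real.pi), ((∑ C ∈ I, suppTh θ C) + suppTh θ D) := by
    apply intervalIntegral.integral_mono_on h2pi
      (cL.intervalIntegrable _ _) (cR.intervalIntegrable _ _)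
    intro θ _
    exact key_pointwise θ I hIne D hDfin hCfin hmeet
  calc perim (⋃₀ (I : Set (Set Plane))) + ∑ C ∈ I, perim (D ∩ C)
      = ∫ θ in (0:ℝ)..(2*Real.pi),
          (suppTh θ (⋃₀ (I : Set (Set Plane))) + ∑ C ∈ I, suppTh θ (D ∩ C)) := by
        rw [intervalIntegral.integral_add (cW.intervalIntegrable _ _)
          ((continuous_finset_sum I cDC).intervalIntegrable _ _),
          intervalIntegral.integral_finset_sum
            (fun C hC => ((cDC C hC).intervalIntegrable _ _))]
        rfl
    _ ≤ ∫ θ in (0:ℝ)..(2*Real.pi), ((∑ C ∈ I, suppTh θ C) + suppTh θ D) := hmono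
    _ = (∑ C ∈ I, perim C) + perim D := by
        rw [intervalIntegral.integral_add ((continuous_finset_sum I cC).intervalIntegrable _ _)
          (cD.intervalIntegrable _ _),
          intervalIntegral.integral_finset_sum
            (fun C hC => ((cC C hC).intervalIntegrable _ _))]
        rfl


/-- `P` is a partition of `A` into nonempty clusters. -/
def IsPartition (A : Set Plane) (P : Finset (Set Plane)) : Prop :=
  (∀ C ∈ P, (C : Set Plane).Nonempty) ∧
  (⋃₀ (P : Set (Set Plane)) = A) ∧
  ((P : Set (Set Plane)).PairwiseDisjoint id)

/-- Cost of a partition with opening cost `η` per cluster. -/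
noncomputable def cost (η : ℝ) (P : Finset (Set Plane)) : ℝ :=
  η * P.card + ∑ C ∈ P, perim C

/-- `P` is an optimal partition for `(A, η)`. -/
def IsOptimalPartition (η : ℝ) (A : Set Plane) (P : Finset (Set Plane)) : Prop :=
  IsPartition A P ∧ ∀ Q : Finset (Set Plane), IsPartition A Q → cost η P ≤ cost η Q

/-- `A` is indivisible for `η`: the one-block partition `{A}` is optimal. -/
def Indivisible (η : ℝ) (A : Set Plane) : Prop :=
  IsOptimalPartition η A {A}

lemma subset_of_mem_partition {A : Set Plane} {P : Finset (Set Plane)}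
    (h : IsPartition A P) {C : Set Plane} (hC : C ∈ P) : C ⊆ A := by
  rw [← h.2.1]
  exact Set.subset_sUnion_of_mem (by exact_mod_cast hC)

lemma disjoint_of_partition {A : Set Plane} {P : Finset (Set Plane)}
    (h : IsPartition A P) {C C' : Set Plane} (hC : C ∈ P) (hC' : C' ∈ P)
    (hne : C ≠ C') : Disjoint C C' :=
  h.2.2 (by exact_mod_cast hC) (by exact_mod_cast hC') hne

lemma uncross {A : Set Plane} (hA : A.Finite) {η : ℝ}
    {P Q : Finset (Set Plane)} (hP : IsOptimalPartition η A P)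
    (hQ : IsOptimalPartition η A Q) {D : Set Plane} (hD : D ∈ Q)
    (hno : ¬ ∃ C ∈ P, D ⊆ C) :
    ∃ P' : Finset (Set Plane), IsOptimalPartition η A P' ∧ P'.card < P.card ∧
      ∀ C ∈ P, ∃ C' ∈ P', C ⊆ C' := by
  classical
  push_neg at hno
  have hDne : D.Nonempty := hQ.1.1 D hD
  have hDA : D ⊆ A := subset_of_mem_partition hQ.1 hD
  have hDfin : D.Finite := hA.subset hDA
  set I : Finset (Set Plane) := P.filter (fun C => (D ∩ C).Nonempty) with hIdef
  have hIP : I ⊆ P := Finset.filter_subset _ _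
  have hmeet : ∀ C ∈ I, (D ∩ C).Nonempty := fun C hC => (Finset.mem_filter.1 hC).2
  have hCne : ∀ C ∈ I, (C : Set Plane).Nonempty := fun C hC =>
    ((hmeet C hC).mono Set.inter_subset_right)
  have hCfin : ∀ C ∈ I, (C : Set Plane).Finite := fun C hC =>
    hA.subset (subset_of_mem_partition hP.1 (hIP hC))
  -- every point of D lies in some block of I
  have hblock : ∀ x ∈ D, ∃ C ∈ I, x ∈ C := by
    intro x hx
    have hxA : x ∈ A := hDA hx
    rw [← hP.1.2.1] at hxA
    obtain ⟨C, hCP, hxC⟩ := hxA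
    exact ⟨C, Finset.mem_filter.2 ⟨by exact_mod_cast hCP, ⟨x, hx, hxC⟩⟩, hxC⟩
  set W : Set Plane := ⋃₀ (I : Set (Set Plane)) with hWdef
  have hDW : D ⊆ W := by
    intro x hx
    obtain ⟨C, hCI, hxC⟩ := hblock x hx
    exact Set.mem_sUnion.2 ⟨C, by exact_mod_cast hCI, hxC⟩
  have hIne : I.Nonempty := by
    obtain ⟨x, hx⟩ := hDne
    obtain ⟨C, hCI, _⟩ := hblock x hx
    exact ⟨C, hCI⟩
  have h2I : 2 ≤ I.card := by
    obtain ⟨x, hx⟩ := hDne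
    obtain ⟨C1, hC1I, hxC1⟩ := hblock x hx
    obtain ⟨y, hyD, hyC1⟩ := Set.not_subset.1 (hno C1 (hIP hC1I))
    obtain ⟨C2, hC2I, hyC2⟩ := hblock y hyD
    have hne12 : C1 ≠ C2 := fun h => hyC1 (h ▸ hyC2)
    exact Finset.one_lt_card.2 ⟨C1, hC1I, C2, hC2I, hne12⟩
  have hWne : W.Nonempty := by
    obtain ⟨C, hC⟩ := hIne
    obtain ⟨x, hx⟩ := hmeet C hC
    exact ⟨x, Set.mem_sUnion.2 ⟨C, by exact_mod_cast hC, hx.2⟩⟩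
  have hWA : W ⊆ A := Set.sUnion_subset fun C hC =>
    subset_of_mem_partition hP.1 (hIP (by exact_mod_cast hC))
  have hWnotin : W ∉ P \ I := by
    intro h
    obtain ⟨hWP, hWnI⟩ := Finset.mem_sdiff.1 h
    obtain ⟨x, hx⟩ := hDne
    exact hWnI (Finset.mem_filter.2 ⟨hWP, ⟨x, hx, hDW hx⟩⟩)
  set P' : Finset (Set Plane) := insert W (P \ I) with hP'def
  -- P' is a partition
  have hP'part : IsPartition A P' := by
    refine ⟨?_, ?_, ?_⟩
    · intro C hC
      rcases Finset.mem_insert.1 hC with h | h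
      · exact h ▸ hWne
      · exact hP.1.1 C (Finset.mem_sdiff.1 h).1
    · apply subset_antisymm
      · intro x hx
        obtain ⟨C, hCP', hxC⟩ := Set.mem_sUnion.1 hx
        have hC' : C ∈ P' := by exact_mod_cast hCP'
        rcases Finset.mem_insert.1 hC' with h | h
        · exact hWA (h ▸ hxC)
        · exact subset_of_mem_partition hP.1 (Finset.mem_sdiff.1 h).1 hxC
      · intro x hx
        rw [← hP.1.2.1] at hx
        obtain ⟨C, hCP, hxC⟩ := hx
        have hCP' : C ∈ P := by exact_mod_cast hCP
        by_cases hCI : C ∈ I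
        · refine Set.mem_sUnion.2 ⟨W, ?_, Set.mem_sUnion.2 ⟨C, by exact_mod_cast hCI, hxC⟩⟩
          exact_mod_cast Finset.mem_insert_self W (P \ I)
        · refine Set.mem_sUnion.2 ⟨C, ?_, hxC⟩
          exact_mod_cast Finset.mem_insert_of_mem (Finset.mem_sdiff.2 ⟨hCP', hCI⟩)
    · -- pairwise disjoint
      have hWdisj : ∀ C ∈ P \ I, Disjoint W C := by
        intro C hC
        obtain ⟨hCP, hCnI⟩ := Finset.mem_sdiff.1 hC
        apply Set.disjoint_sUnion_left.2
        intro B hB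
        have hBI : B ∈ I := by exact_mod_cast hB
        have hBne : B ≠ C := fun h => hCnI (h ▸ hBI)
        exact disjoint_of_partition hP.1 (hIP hBI) hCP hBne
      intro x hx y hy hxy
      have hx' : x ∈ P' := by exact_mod_cast hx
      have hy' : y ∈ P' := by exact_mod_cast hy
      rcases Finset.mem_insert.1 hx' with h1 | h1 <;>
        rcases Finset.mem_insert.1 hy' with h2 | h2
      · exact absurd (h1.trans h2.symm) hxy
      · exact h1 ▸ (hWdisj y h2)
      · exact h2 ▸ (hWdisj x h1).symm
      · exact disjoint_of_partition hP.1 (Finset.mem_sdiff.1 h1).1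
          (Finset.mem_sdiff.1 h2).1 hxy
  -- pieces of D
  have hinj : Set.InjOn (fun C => D ∩ C) ↑I := by
    intro C1 h1 C2 h2 heq
    by_contra hne
    obtain ⟨x, hx⟩ := hmeet C1 (by exact_mod_cast h1)
    have heq' : D ∩ C1 = D ∩ C2 := heq
    have hx2 : x ∈ D ∩ C2 := heq' ▸ hx
    exact (disjoint_of_partition hP.1 (hIP (by exact_mod_cast h1))
      (hIP (by exact_mod_cast h2)) hne).ne_of_mem hx.2 hx2.2 rfl
  set pieces : Finset (Set Plane) := I.image (fun C => D ∩ C) with hpiecesdef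
  have hpiece_not_erase : ∀ E ∈ pieces, E ∉ Q.erase D := by
    intro E hE hEQ
    obtain ⟨C, hCI, hEC⟩ := Finset.mem_image.1 hE
    have hEQ' : E ∈ Q := Finset.mem_of_mem_erase hEQ
    have hEneD : E ≠ D := Finset.ne_of_mem_erase hEQ
    have hdisj : Disjoint E D := disjoint_of_partition hQ.1 hEQ' hD hEneD
    obtain ⟨x, hx⟩ := hmeet C hCI
    have hxE : x ∈ E := hEC ▸ hx
    exact hdisj.ne_of_mem hxE hx.1 rfl
  have hdisjQ : Disjoint (Q.erase D) pieces :=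
    Finset.disjoint_right.2 fun E hE => hpiece_not_erase E hE
  set Q' : Finset (Set Plane) := Q.erase D ∪ pieces with hQ'def
  have hQ'part : IsPartition A Q' := by
    refine ⟨?_, ?_, ?_⟩
    · intro C hC
      rcases Finset.mem_union.1 hC with h | h
      · exact hQ.1.1 C (Finset.mem_of_mem_erase h)
      · obtain ⟨B, hBI, hBC⟩ := Finset.mem_image.1 h
        exact hBC ▸ hmeet B hBI
    · have hpieceD : ⋃₀ (pieces : Set (Set Plane)) = D := by
        apply subset_antisymm
        · intro x hx
          obtain ⟨E, hE, hxE⟩ := Set.mem_sUnion.1 hx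
          obtain ⟨C, hCI, hEC⟩ := Finset.mem_image.1 (by exact_mod_cast hE)
          rw [← hEC] at hxE
          exact hxE.1
        · intro x hx
          obtain ⟨C, hCI, hxC⟩ := hblock x hx
          refine Set.mem_sUnion.2 ⟨D ∩ C, ?_, ⟨hx, hxC⟩⟩
          exact_mod_cast Finset.mem_image_of_mem _ hCI
      have hQsplit : ⋃₀ (Q : Set (Set Plane))
          = D ∪ ⋃₀ ((Q.erase D : Finset (Set Plane)) : Set (Set Plane)) := by
        conv_lhs => rw [← Finset.insert_erase hD]
        push_cast
        rw [Set.sUnion_insert]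
      have : ((Q' : Finset (Set Plane)) : Set (Set Plane))
          = ((Q.erase D : Finset (Set Plane)) : Set (Set Plane)) ∪ ↑pieces := by
        rw [hQ'def, Finset.coe_union]
      rw [this, Set.sUnion_union, hpieceD, ← hQ.1.2.1, hQsplit, Set.union_comm]
    · intro x hx y hy hxy
      have hx' : x ∈ Q' := by exact_mod_cast hx
      have hy' : y ∈ Q' := by exact_mod_cast hy
      have hcase : ∀ z, z ∈ Q' → z ∈ Q.erase D ∨ ∃ C ∈ I, z = D ∩ C := by
        intro z hz
        rcases Finset.mem_union.1 hz with h | h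
        · exact Or.inl h
        · obtain ⟨C, hCI, hEC⟩ := Finset.mem_image.1 h
          exact Or.inr ⟨C, hCI, hEC.symm⟩
      have hErD : ∀ z ∈ Q.erase D, Disjoint z D := fun z hz =>
        disjoint_of_partition hQ.1 (Finset.mem_of_mem_erase hz) hD
          (Finset.ne_of_mem_erase hz)
      rcases hcase x hx' with h1 | ⟨C1, hC1, rfl⟩ <;>
        rcases hcase y hy' with h2 | ⟨C2, hC2, rfl⟩
      · exact disjoint_of_partition hQ.1 (Finset.mem_of_mem_erase h1)
          (Finset.mem_of_mem_erase h2) hxy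
      · exact ((hErD x h1).mono_right Set.inter_subset_left)
      · exact ((hErD y h2).mono_right Set.inter_subset_left).symm
      · have hC12 : C1 ≠ C2 := by
          intro h; exact hxy (by rw [h])
        exact (disjoint_of_partition hP.1 (hIP hC1) (hIP hC2) hC12).mono
          Set.inter_subset_right Set.inter_subset_right
  -- cardinalities
  have hcardI : I.card ≤ P.card := Finset.card_le_card hIP
  have hcardP' : P'.card = P.card - I.card + 1 := by
    rw [hP'def, Finset.card_insert_of_notMem hWnotin, Finset.card_sdiff_of_subset hIP]
  have h1Q : 1 ≤ Q.card := Finset.card_pos.2 ⟨D, hD⟩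
  have hcardQ' : Q'.card = Q.card - 1 + I.card := by
    rw [hQ'def, Finset.card_union_of_disjoint hdisjQ, Finset.card_erase_of_mem hD,
      hpiecesdef, Finset.card_image_of_injOn hinj]
  -- sums
  have sumP' : ∑ C ∈ P', perim C = perim W + ∑ C ∈ P \ I, perim C :=
    Finset.sum_insert hWnotin
  have sumP : ∑ C ∈ P \ I, perim C + ∑ C ∈ I, perim C = ∑ C ∈ P, perim C :=
    Finset.sum_sdiff hIP
  have sumQ' : ∑ C ∈ Q', perim C
      = ∑ C ∈ Q.erase D, perim C + ∑ C ∈ I, perim (D ∩ C) := by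
    rw [hQ'def, Finset.sum_union hdisjQ, hpiecesdef,
      Finset.sum_image (fun x hx y hy h => hinj (by exact_mod_cast hx) (by exact_mod_cast hy) h)]
  have sumQ : ∑ C ∈ Q.erase D, perim C + perim D = ∑ C ∈ Q, perim C :=
    Finset.sum_erase_add Q _ hD
  have key := key_perim I hIne D hDfin hDne hCfin hmeet
  -- cost comparison
  have hQle : cost η Q ≤ cost η Q' := hQ.2 Q' hQ'part
  have hcost : cost η P' ≤ cost η P := by
    have c1 : cost η P' = η * ((P.card : ℝ) - I.card + 1)
        + (perim W + ∑ C ∈ P \ I, perim C) := by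
      rw [cost, sumP', hcardP', Nat.cast_add, Nat.cast_sub hcardI, Nat.cast_one]
    have c2 : cost η Q' = η * ((Q.card : ℝ) - 1 + I.card)
        + (∑ C ∈ Q.erase D, perim C + ∑ C ∈ I, perim (D ∩ C)) := by
      rw [cost, sumQ', hcardQ', Nat.cast_add, Nat.cast_sub h1Q, Nat.cast_one]
    have c3 : cost η P = η * (P.card : ℝ)
        + (∑ C ∈ P \ I, perim C + ∑ C ∈ I, perim C) := by
      rw [cost, sumP]
    have c4 : cost η Q = η * (Q.card : ℝ)
        + (∑ C ∈ Q.erase D, perim C + perim D) := by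
      rw [cost, sumQ]
    have hrng : η * ((P.card : ℝ) - I.card + 1) + η * ((Q.card : ℝ) - 1 + I.card)
        = η * (P.card : ℝ) + η * (Q.card : ℝ) := by ring
    rw [← hWdef] at key
    linarith [key, hQle]
  refine ⟨P', ⟨hP'part, fun R hR => le_trans hcost (hP.2 R hR)⟩, ?_, ?_⟩
  · omega
  · intro C hC
    by_cases hCI : C ∈ I
    · refine ⟨W, Finset.mem_insert_self _ _, ?_⟩
      exact Set.subset_sUnion_of_mem (by exact_mod_cast hCI)
    · exact ⟨C, Finset.mem_insert_of_mem (Finset.mem_sdiff.2 ⟨hC, hCI⟩), subset_rfl⟩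


/-- A maximal optimal partition of `(A, η)`. -/
def IsMaximalOptimal (η : ℝ) (A : Set Plane) (P : Finset (Set Plane)) : Prop :=
  IsOptimalPartition η A P ∧
  ¬ ∃ Q : Finset (Set Plane), IsOptimalPartition η A Q ∧ Q.card < P.card ∧
      ∀ C ∈ P, ∃ C' ∈ Q, C ⊆ C'

lemma partitions_finite {A : Set Plane} (hA : A.Finite) :
    {P : Finset (Set Plane) | IsPartition A P}.Finite := by
  classical
  have h1 : {B : Set Plane | B ⊆ A}.Finite := hA.finite_subsets
  have h2 : {s : Set (Set Plane) | s ⊆ {B | B ⊆ A}}.Finite := h1.finite_subsets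
  have h3 : ((fun P : Finset (Set Plane) => (P : Set (Set Plane))) ⁻¹'
      {s : Set (Set Plane) | s ⊆ {B | B ⊆ A}}).Finite :=
    h2.preimage (Finset.coe_injective.injOn)
  apply h3.subset
  intro P hP
  intro C hC
  exact subset_of_mem_partition hP (by exact_mod_cast hC)

lemma singleton_partition {A : Set Plane} (hAne : A.Nonempty) :
    IsPartition A ({A} : Finset (Set Plane)) := by
  refine ⟨?_, ?_, ?_⟩
  · intro C hC
    rw [Finset.mem_singleton.1 hC]
    exact hAne
  · simp
  · simp

/-- existence and uniqueness of the maximal optimal partition. -/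
theorem maximal_optimal_partition_exists_unique
    (A : Set Plane) (hA : A.Finite) (hAne : A.Nonempty) (η : ℝ) (hη : 0 < η) :
    (∃ P : Finset (Set Plane), IsMaximalOptimal η A P) ∧
    (∀ P Q : Finset (Set Plane),
      IsMaximalOptimal η A P → IsMaximalOptimal η A Q → P = Q) := by
  classical
  constructor
  · -- existence
    set S : Set (Finset (Set Plane)) := {P | IsPartition A P} with hSdef
    have hSfin : S.Finite := partitions_finite hA
    have hSne : S.Nonempty := ⟨{A}, singleton_partition hAne⟩
    obtain ⟨P₀, hP₀S, hP₀min⟩ := Set.exists_min_image S (cost η) hSfin hSne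
    have hP₀opt : IsOptimalPartition η A P₀ := ⟨hP₀S, fun Q hQ => hP₀min Q hQ⟩
    set Opt : Set (Finset (Set Plane)) := {P | IsOptimalPartition η A P} with hOptdef
    have hOptfin : Opt.Finite := hSfin.subset (fun P hP => hP.1)
    have hOptne : Opt.Nonempty := ⟨P₀, hP₀opt⟩
    obtain ⟨M, hM, hMmin⟩ :=
      Set.exists_min_image Opt (fun P => P.card) hOptfin hOptne
    refine ⟨M, hM, ?_⟩
    rintro ⟨Q, hQopt, hQlt, -⟩
    exact absurd (hMmin Q hQopt) (by omega)
  · -- uniqueness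
    intro M N hM hN
    have href : ∀ (M N : Finset (Set Plane)), IsMaximalOptimal η A M →
        IsMaximalOptimal η A N → ∀ D ∈ N, ∃ C ∈ M, D ⊆ C := by
      intro M N hM hN D hD
      by_contra h
      obtain ⟨P', hP'opt, hP'lt, hP'coar⟩ := uncross hA hM.1 hN.1 hD h
      exact hM.2 ⟨P', hP'opt, hP'lt, hP'coar⟩
    have hsub : ∀ (M N : Finset (Set Plane)), IsMaximalOptimal η A M →
        IsMaximalOptimal η A N → M ⊆ N := by
      intro M N hM hN
      intro C hC
      obtain ⟨D, hDN, hCD⟩ := href N M hN hM C hC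
      obtain ⟨C', hC'M, hDC'⟩ := href M N hM hN D hDN
      have hCC' : C ⊆ C' := hCD.trans hDC'
      have hCne : C.Nonempty := hM.1.1.1 C hC
      have hCeq : C = C' := by
        by_contra hne
        obtain ⟨x, hx⟩ := hCne
        exact (disjoint_of_partition hM.1.1 hC hC'M hne).ne_of_mem hx (hCC' hx) rfl
      have hCDeq : C = D := subset_antisymm hCD (hCeq ▸ hDC')
      exact hCDeq ▸ hDN
    exact Finset.Subset.antisymm (hsub M N hM hN) (hsub N M hN hM)


end
end

section
/- Let A be a finite nonempty set of n points in ℝ², let η > 0, and let p, q ∈ A satisfy ‖p − q‖ > n·η/2. Then in every optimal partition of (A, η), the points p and q lie in different clusters. (In particular, the optimal cost satisfies Opt(A, η) ≤ n·η, since the partition into n singletons has cost n·η.) -/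
noncomputable section

open Real intervalIntegral

lemma sin_three_pi_div_two : Real.sin (3*π/2) = -1 := by
  have : (3*π/2 : ℝ) = π + π/2 := by ring
  rw [this, Real.sin_add]; simp

lemma integral_abs_cos : ∫ θ in (0:ℝ)..(2*π), |Real.cos θ| = 4 := by
  have h1 : ∫ θ in (0:ℝ)..(π/2), |Real.cos θ| = 1 := by
    rw [integral_congr (g := Real.cos) ?_, integral_cos]
    · simp
    · intro x hx
      rw [Set.uIcc_of_le (by positivity)] at hx
      exact abs_of_nonneg (Real.cos_nonneg_of_mem_Icc ⟨by linarith [hx.1, pi_pos], hx.2⟩)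
  have h2 : ∫ θ in (π/2)..(3*π/2), |Real.cos θ| = 2 := by
    rw [integral_congr (g := fun x => -Real.cos x) ?_]
    · rw [integral_neg, integral_cos, sin_three_pi_div_two]; simp; ring
    · intro x hx
      rw [Set.uIcc_of_le (by linarith [pi_pos])] at hx
      exact abs_of_nonpos (Real.cos_nonpos_of_pi_div_two_le_of_le hx.1 (by linarith [hx.2]))
  have h3 : ∫ θ in (3*π/2)..(2*π), |Real.cos θ| = 1 := by
    rw [integral_congr (g := Real.cos) ?_, integral_cos]
    · rw [sin_three_pi_div_two]; simp
    · intro x hx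
      rw [Set.uIcc_of_le (by linarith [pi_pos])] at hx
      show |Real.cos x| = Real.cos x
      rw [← Real.cos_sub_two_pi x]
      apply abs_of_nonneg
      apply Real.cos_nonneg_of_mem_Icc
      rw [Set.mem_Icc]
      constructor <;> linarith [hx.1, hx.2, pi_pos]
  have i1 : IntervalIntegrable (fun θ => |Real.cos θ|) MeasureTheory.volume 0 (π/2) :=
    (Real.continuous_cos.abs).intervalIntegrable _ _
  have i2 : IntervalIntegrable (fun θ => |Real.cos θ|) MeasureTheory.volume (π/2) (3*π/2) :=
    (Real.continuous_cos.abs).intervalIntegrable _ _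
  have i12 : IntervalIntegrable (fun θ => |Real.cos θ|) MeasureTheory.volume 0 (3*π/2) :=
    (Real.continuous_cos.abs).intervalIntegrable _ _
  have i3 : IntervalIntegrable (fun θ => |Real.cos θ|) MeasureTheory.volume (3*π/2) (2*π) :=
    (Real.continuous_cos.abs).intervalIntegrable _ _
  have e1 := integral_add_adjacent_intervals i1 i2
  have e2 := integral_add_adjacent_intervals i12 i3
  rw [← e2, ← e1, h1, h2, h3]; norm_num

lemma integral_abs_line (a b : ℝ) :
    ∫ θ in (0:ℝ)..(2*π), |a * Real.cos θ + b * Real.sin θ| = 4 * Real.sqrt (a^2 + b^2) := by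
  rcases eq_or_ne (Real.sqrt (a^2+b^2)) 0 with h0 | h0
  · have ha : a = 0 := by nlinarith [Real.sq_sqrt (by positivity : (0:ℝ) ≤ a^2+b^2), sq_nonneg a, sq_nonneg b]
    have hb : b = 0 := by nlinarith [Real.sq_sqrt (by positivity : (0:ℝ) ≤ a^2+b^2), sq_nonneg a, sq_nonneg b]
    simp [ha, hb, h0]
  · have hrpos : 0 < Real.sqrt (a^2+b^2) := lt_of_le_of_ne (Real.sqrt_nonneg _) (Ne.symm h0)
    set r : ℝ := Real.sqrt (a^2+b^2) with hr
    set z : ℂ := ⟨a, b⟩ with hz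
    have hzne : z ≠ 0 := by
      intro h
      have ha : a = 0 := congrArg Complex.re h
      have hb : b = 0 := congrArg Complex.im h
      apply h0; rw [hr, ha, hb]; simp
    have habs : ‖z‖ = r := by
      rw [Complex.norm_def, Complex.normSq_apply, hr]
      norm_num [hz]
      ring_nf
    have hca : Real.cos z.arg = a / r := by rw [Complex.cos_arg hzne, habs]
    have hsa : Real.sin z.arg = b / r := by rw [Complex.sin_arg, habs]
    have key : ∀ θ : ℝ, a * Real.cos θ + b * Real.sin θ = r * Real.cos (θ - z.arg) := by
      intro θ
      rw [Real.cos_sub, hca, hsa]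
      field_simp
    calc ∫ θ in (0:ℝ)..(2*π), |a * Real.cos θ + b * Real.sin θ|
        = ∫ θ in (0:ℝ)..(2*π), r * |Real.cos (θ - z.arg)| := by
          apply integral_congr; intro x _
          show |a * Real.cos x + b * Real.sin x| = r * |Real.cos (x - z.arg)|
          rw [key x, abs_mul, abs_of_pos hrpos]
      _ = r * ∫ θ in (0:ℝ)..(2*π), |Real.cos (θ - z.arg)| := integral_const_mul _ _
      _ = r * ∫ θ in (0 - z.arg)..(2*π - z.arg), |Real.cos θ| := by
          rw [intervalIntegral.integral_comp_sub_right (fun θ => |Real.cos θ|) z.arg]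
      _ = r * ∫ θ in (0:ℝ)..(2*π), |Real.cos θ| := by
          congr 1
          have hper : Function.Periodic (fun θ => |Real.cos θ|) (2*π) := fun x => by
            simp [Real.cos_add_two_pi]
          have := hper.intervalIntegral_add_eq (-z.arg) 0
          simpa [sub_eq_add_neg, add_comm] using this
      _ = 4 * r := by rw [integral_abs_cos]; ring



/-- support function summand -/
private def gg (x : Plane) (θ : ℝ) : ℝ := x 0 * Real.cos θ + x 1 * Real.sin θ

private lemma gg_cont (x : Plane) : Continuous (gg x) := by
  unfold gg; fun_prop

private lemma integral_gg (x : Plane) : ∫ θ in (0:ℝ)..(2*π), gg x θ = 0 := by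
  unfold gg
  rw [intervalIntegral.integral_add
      ((by fun_prop : Continuous fun θ => x 0 * Real.cos θ).intervalIntegrable _ _)
      ((by fun_prop : Continuous fun θ => x 1 * Real.sin θ).intervalIntegrable _ _),
    integral_const_mul, integral_const_mul, integral_cos, integral_sin]
  simp

private lemma sSup_eq_sup' (C : Set Plane) (hC : C.Finite) (hne : hC.toFinset.Nonempty) (θ : ℝ) :
    sSup ((fun p : Plane => p 0 * Real.cos θ + p 1 * Real.sin θ) '' C)
      = hC.toFinset.sup' hne (fun x => gg x θ) := by
  rw [Finset.sup'_eq_csSup_image]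
  congr 1
  rw [Set.Finite.coe_toFinset]
  rfl

private lemma perim_eq_s8 (C : Set Plane) (hC : C.Finite) (hne : hC.toFinset.Nonempty) :
    perim C = ∫ θ in (0:ℝ)..(2*π), hC.toFinset.sup' hne (fun x => gg x θ) := by
  unfold perim
  congr 1
  funext θ
  exact sSup_eq_sup' C hC hne θ

private lemma hdist_eq (p q : Plane) :
    dist p q = Real.sqrt ((p 0 - q 0)^2 + (p 1 - q 1)^2) := by
  rw [EuclideanSpace.dist_eq]
  simp [Fin.sum_univ_two, Real.dist_eq, sq_abs]

lemma perim_ge_two_dist (C : Set Plane) (hC : C.Finite) (p q : Plane)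
    (hp : p ∈ C) (hq : q ∈ C) : 2 * dist p q ≤ perim C := by
  have hne : hC.toFinset.Nonempty := ⟨p, hC.mem_toFinset.mpr hp⟩
  set F : ℝ → ℝ := fun θ => hC.toFinset.sup' hne (fun x => gg x θ) with hF
  have hFc : Continuous F := Continuous.finset_sup'_apply hne (fun i _ => gg_cont i)
  have hlowc : Continuous (fun θ => (gg p θ + gg q θ)/2 + |gg p θ - gg q θ|/2) := by
    have := gg_cont p; have := gg_cont q; fun_prop
  have hlow : ∀ θ ∈ Set.Icc (0:ℝ) (2*π),
      (gg p θ + gg q θ)/2 + |gg p θ - gg q θ|/2 ≤ F θ := by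
    intro θ _
    have h1 : gg p θ ≤ F θ := Finset.le_sup' (fun x => gg x θ) (hC.mem_toFinset.mpr hp)
    have h2 : gg q θ ≤ F θ := Finset.le_sup' (fun x => gg x θ) (hC.mem_toFinset.mpr hq)
    rcases abs_cases (gg p θ - gg q θ) with ⟨h, _⟩ | ⟨h, _⟩ <;> rw [h] <;> linarith

  have c1 : Continuous (fun θ => (gg p θ + gg q θ)/2) := ((gg_cont p).add (gg_cont q)).div_const 2
  have c2 : Continuous (fun θ => |gg p θ - gg q θ|/2) := (((gg_cont p).sub (gg_cont q)).abs).div_const 2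
  have hI1 : ∫ θ in (0:ℝ)..(2*π), (gg p θ + gg q θ)/2 = 0 := by
    rw [intervalIntegral.integral_div,
      intervalIntegral.integral_add ((gg_cont p).intervalIntegrable _ _)
        ((gg_cont q).intervalIntegrable _ _), integral_gg, integral_gg]
    norm_num
  have hI2 : ∫ θ in (0:ℝ)..(2*π), |gg p θ - gg q θ|/2 = 2 * dist p q := by
    have e : (fun θ => |gg p θ - gg q θ|)
        = fun θ => |(p 0 - q 0) * Real.cos θ + (p 1 - q 1) * Real.sin θ| := by
      funext θ; unfold gg; ring_nf
    rw [intervalIntegral.integral_div, e, integral_abs_line, hdist_eq]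
    ring
  have hint : ∫ θ in (0:ℝ)..(2*π), ((gg p θ + gg q θ)/2 + |gg p θ - gg q θ|/2)
      = 2 * dist p q := by
    rw [intervalIntegral.integral_add (c1.intervalIntegrable _ _) (c2.intervalIntegrable _ _),
      hI1, hI2]
    ring
  have hmono := intervalIntegral.integral_mono_on (μ := MeasureTheory.volume) (by linarith [pi_pos] : (0:ℝ) ≤ 2*π)
    (hlowc.intervalIntegrable 0 (2*π)) (hFc.intervalIntegrable 0 (2*π)) hlow
  rw [hint] at hmono
  rw [perim_eq_s8 C hC hne]
  exact hmono

lemma perim_nonneg (C : Set Plane) (hC : C.Finite) (hne : C.Nonempty) : 0 ≤ perim C := by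
  obtain ⟨x, hx⟩ := hne
  have := perim_ge_two_dist C hC x x hx hx
  simpa using this

lemma perim_singleton (x : Plane) : perim {x} = 0 := by
  unfold perim
  simp only [Set.image_singleton, csSup_singleton]
  exact integral_gg x

/-- two points at distance more than n·η/2 lie in different clusters
of every optimal partition; moreover the optimal cost is at most n·η. -/
theorem far_points_different_clusters
    (A : Set Plane) (hA : A.Finite) (hAne : A.Nonempty) (η : ℝ) (hη : 0 < η)
    (p q : Plane) (hp : p ∈ A) (hq : q ∈ A)
    (hfar : dist p q > (A.ncard : ℝ) * η / 2)
    (P : Finset (Set Plane)) (hP : IsOptimalPartition η A P) :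
    (∀ C ∈ P, ¬ (p ∈ C ∧ q ∈ C)) ∧ cost η P ≤ (A.ncard : ℝ) * η := by
  classical
  obtain ⟨⟨hPne, hPun, hPdisj⟩, hPopt⟩ := hP
  set S : Finset (Set Plane) := hA.toFinset.image (fun x => ({x} : Set Plane)) with hS
  have hScard : (S.card : ℝ) = (A.ncard : ℝ) := by
    rw [hS, Finset.card_image_of_injective _ Set.singleton_injective,
      Set.ncard_eq_toFinset_card A hA]
  have hSpart : IsPartition A S := by
    refine ⟨?_, ?_, ?_⟩
    · intro C hC
      obtain ⟨x, -, rfl⟩ := Finset.mem_image.mp hC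
      exact ⟨x, rfl⟩
    · ext y
      simp [hS, Set.Finite.mem_toFinset]
    · intro C hC D hD hne
      obtain ⟨x, -, rfl⟩ := Finset.mem_image.mp (Finset.mem_coe.mp hC)
      obtain ⟨y, -, rfl⟩ := Finset.mem_image.mp (Finset.mem_coe.mp hD)
      simp only [Function.onFun, id]
      rw [Set.disjoint_singleton]
      intro h; exact hne (by rw [h])
  have hScost : cost η S = (A.ncard : ℝ) * η := by
    unfold cost
    rw [Finset.sum_eq_zero, hScard]
    · ring
    · intro C hC
      obtain ⟨x, -, rfl⟩ := Finset.mem_image.mp hC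
      exact perim_singleton x
  have h2 : cost η P ≤ (A.ncard : ℝ) * η := (hPopt S hSpart).trans_eq hScost
  refine ⟨?_, h2⟩
  rintro C hC ⟨hpc, hqc⟩
  have hsub : ∀ D ∈ P, D ⊆ A := fun D hD =>
    hPun ▸ Set.subset_sUnion_of_mem (Finset.mem_coe.mpr hD)
  have hCfin : C.Finite := hA.subset (hsub C hC)
  have hnonneg : ∀ D ∈ P, 0 ≤ perim D := fun D hD =>
    perim_nonneg D (hA.subset (hsub D hD)) (hPne D hD)
  have hsum : perim C ≤ ∑ D ∈ P, perim D := Finset.single_le_sum hnonneg hC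
  have hkey : 2 * dist p q ≤ perim C := perim_ge_two_dist C hCfin p q hpc hqc
  have hcard : (0:ℝ) ≤ η * P.card := by positivity
  have hcostP : cost η P = η * P.card + ∑ D ∈ P, perim D := rfl
  linarith [hfar]


end
end
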